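/- Let V be a finite-dimensional real vector space with full-rank lattice L and dual lattice L*. Let C be a nonempty open proper cone in V and D an open subcone with closure(D) ⊂ C ∪ {0}. Then for any ξ ∈ V*, the set (C* \ (ξ + closure(D*))) ∩ L* is finite, where C* and D* are the dual cones of C and D respectively. -/

import Mathlib

/-- If C is a nonempty open proper cone and D an open subcone with closure D ⊆ C ∪ {0},
then for any ξ the set (C* \ (ξ + closure D*)) ∩ L* is finite. -/
theorem stmt_2 {V : Type*} [NormedAddCommGroup V] [NormedSpace ℝ V]
    {ι : Type*} [Fintype ι] (b : Module.Basis ι ℝ V)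
    (C D : Set V) (hCopen : IsOpen C) (hCne : C.Nonempty)
    (hCcone : ∀ x ∈ C, ∀ t : ℝ, 0 < t → t • x ∈ C)
    (hproper : ∃ η : V →L[ℝ] ℝ, ∀ x ∈ C, x ≠ 0 → 0 < η x)
    (hDopen : IsOpen D) (hDne : D.Nonempty)
    (hDcone : ∀ x ∈ D, ∀ t : ℝ, 0 < t → t • x ∈ D)
    (hDC : D ⊆ C) (hclos : closure D ⊆ C ∪ {0})
    (ξ : V →L[ℝ] ℝ) :
    Set.Finite {lam : V →L[ℝ] ℝ |
      (∀ x ∈ C, x ≠ 0 → 0 < lam x) ∧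
      lam - ξ ∉ closure {μ : V →L[ℝ] ℝ | ∀ x ∈ D, x ≠ 0 → 0 < μ x} ∧
      (∀ w ∈ Submodule.span ℤ (Set.range b), ∃ n : ℤ, lam w = n)} := by
  classical
  rcases subsingleton_or_nontrivial V with hV | hV
  · exact Set.subsingleton_of_subsingleton.finite
  have : FiniteDimensional ℝ V := Module.Finite.of_basis b
  obtain ⟨η, hη⟩ := hproper
  -- 0 is not in C
  have h0C : (0 : V) ∉ C := by
    intro h0
    obtain ⟨r, hr, hball⟩ := Metric.isOpen_iff.1 hCopen 0 h0
    obtain ⟨v, hv⟩ := exists_ne (0 : V)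
    have hvn : (0 : ℝ) < ‖v‖ := norm_pos_iff.2 hv
    set w : V := (r / (2 * ‖v‖)) • v with hw
    have hwne : w ≠ 0 := smul_ne_zero (by positivity) hv
    have hwnorm : ‖w‖ < r := by
      rw [hw, norm_smul, Real.norm_eq_abs, abs_of_pos (by positivity),
        div_mul_eq_mul_div, div_lt_iff₀ (by positivity)]
      nlinarith
    have hwC : w ∈ C := hball (by simpa [Metric.mem_ball, dist_zero_right] using hwnorm)
    have hwC' : -w ∈ C := hball (by simpa [Metric.mem_ball, dist_zero_right] using hwnorm)
    have h1 := hη w hwC hwne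
    have h2 := hη (-w) hwC' (neg_ne_zero.2 hwne)
    rw [map_neg] at h2
    linarith
  have h0D : (0 : V) ∉ D := fun h => h0C (hDC h)
  obtain ⟨x₀, hx₀⟩ := hCne
  obtain ⟨r, hr, hball⟩ := Metric.isOpen_iff.1 hCopen x₀ hx₀
  -- the compact piece of closure D on the unit sphere
  set K : Set V := Metric.sphere (0 : V) 1 ∩ closure D with hK
  have hKc : IsCompact K := (isCompact_sphere 0 1).inter_right isClosed_closure
  have hKC : K ⊆ C := by
    rintro z ⟨hz1, hz2⟩
    rcases hclos hz2 with h | h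
    · exact h
    · exfalso
      rw [Set.mem_singleton_iff] at h
      rw [h, mem_sphere_zero_iff_norm, norm_zero] at hz1
      norm_num at hz1
  obtain ⟨δ, hδ, hthick⟩ := hKc.exists_cthickening_subset_open hCopen hKC
  set ε : ℝ := δ / (‖x₀‖ + 1) with hε
  have hεpos : 0 < ε := by positivity
  -- main pointwise bound on the basis values
  set M : ℝ := 2 * (‖ξ‖ / ε) / r with hM
  have key : ∀ lam : V →L[ℝ] ℝ,
      (∀ x ∈ C, x ≠ 0 → 0 < lam x) →
      lam - ξ ∉ closure {μ : V →L[ℝ] ℝ | ∀ x ∈ D, x ≠ 0 → 0 < μ x} →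
      ∀ i, |lam (b i)| ≤ M * ‖b i‖ := by
    intro lam h1 h2 i
    have lamnn : ∀ z ∈ C, 0 ≤ lam z := by
      intro z hz
      rcases eq_or_ne z 0 with h | h
      · simp [h]
      · exact (h1 z hz h).le
    -- find x ∈ D where lam - ξ is negative
    have hex : ∃ x ∈ D, (lam - ξ) x < 0 := by
      by_contra hcon
      push_neg at hcon
      apply h2
      have htend : Filter.Tendsto (fun n : ℕ => (lam - ξ) + (1 / ((n : ℝ) + 1)) • η)
          Filter.atTop (nhds (lam - ξ)) := by
        have h0 : Filter.Tendsto (fun n : ℕ => (1 / ((n : ℝ) + 1)) • η)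
            Filter.atTop (nhds ((0 : ℝ) • η)) :=
          tendsto_one_div_add_atTop_nhds_zero_nat.smul_const η
        rw [zero_smul] at h0
        simpa using (tendsto_const_nhds.add h0 :
          Filter.Tendsto (fun n : ℕ => (lam - ξ) + (1 / ((n : ℝ) + 1)) • η)
          Filter.atTop (nhds ((lam - ξ) + 0)))
      refine mem_closure_of_tendsto htend (Filter.Eventually.of_forall fun n => ?_)
      intro x hxD hxne
      have hpos : 0 < (1 / ((n : ℝ) + 1)) * η x := by
        have := hη x (hDC hxD) hxne
        positivity
      have := hcon x hxD
      simp only [ContinuousLinearMap.add_apply, ContinuousLinearMap.smul_apply,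
        smul_eq_mul]
      linarith
    obtain ⟨x, hxD, hxlt⟩ := hex
    have hxne : x ≠ 0 := fun h => h0D (h ▸ hxD)
    have hxn : (0 : ℝ) < ‖x‖ := norm_pos_iff.2 hxne
    obtain ⟨u, huD, hunorm, hult⟩ : ∃ u, u ∈ D ∧ ‖u‖ = 1 ∧ lam u < ξ u := by
      refine ⟨‖x‖⁻¹ • x, hDcone x hxD _ (inv_pos.2 hxn), ?_, ?_⟩
      · rw [norm_smul, Real.norm_eq_abs, abs_of_pos (inv_pos.2 hxn),
          inv_mul_cancel₀ (ne_of_gt hxn)]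
      · have h5 : (lam - ξ) (‖x‖⁻¹ • x) < 0 := by
          rw [map_smul, smul_eq_mul]
          exact mul_neg_of_pos_of_neg (inv_pos.2 hxn) hxlt
        rw [ContinuousLinearMap.sub_apply, sub_neg] at h5
        exact h5
    have hule : lam u ≤ ‖ξ‖ := by
      have h1' : ξ u ≤ ‖ξ‖ * ‖u‖ := le_trans (le_abs_self _) (ξ.le_opNorm u)
      rw [hunorm, mul_one] at h1'
      linarith
    -- u - ε • x₀ ∈ C
    have huK : u ∈ K := ⟨by rwa [mem_sphere_zero_iff_norm], subset_closure huD⟩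
    have hsubC : u - ε • x₀ ∈ C := by
      apply hthick
      apply Metric.mem_cthickening_of_dist_le _ u δ K huK
      rw [dist_eq_norm]
      have : u - ε • x₀ - u = -(ε • x₀) := by abel
      rw [this, norm_neg, norm_smul, Real.norm_eq_abs, abs_of_pos hεpos]
      rw [hε, div_mul_eq_mul_div]
      rw [div_le_iff₀ (by positivity)]
      nlinarith [norm_nonneg x₀]
    -- lam x₀ ≤ ‖ξ‖ / ε
    have hx₀le : lam x₀ ≤ ‖ξ‖ / ε := by
      have h0 : 0 ≤ lam (u - ε • x₀) := lamnn _ hsubC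
      have e : lam (u - ε • x₀) = lam u - ε * lam x₀ := by
        rw [map_sub, map_smul, smul_eq_mul]
      rw [e] at h0
      rw [le_div_iff₀ hεpos]
      nlinarith
    have hx₀nn : 0 ≤ lam x₀ := lamnn x₀ hx₀
    -- |lam y| ≤ lam x₀ for ‖y‖ < r
    have hsmall : ∀ y : V, ‖y‖ < r → |lam y| ≤ lam x₀ := by
      intro y hy
      have hp : 0 ≤ lam (x₀ + y) := by
        apply lamnn
        apply hball
        simp [Metric.mem_ball, dist_eq_norm, hy]
      have hm : 0 ≤ lam (x₀ - y) := by
        apply lamnn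
        apply hball
        simp only [Metric.mem_ball, dist_eq_norm]
        simpa [norm_sub_rev] using (by simpa [norm_neg] using hy : ‖-y‖ < r)
      rw [map_add] at hp
      rw [map_sub] at hm
      exact abs_le.2 ⟨by linarith, by linarith⟩
    -- apply to scaled basis vector
    have hbne : b i ≠ 0 := b.ne_zero i
    have hbn : (0 : ℝ) < ‖b i‖ := norm_pos_iff.2 hbne
    have hkey := hsmall ((r / (2 * ‖b i‖)) • b i) (by
      rw [norm_smul, Real.norm_eq_abs, abs_of_pos (by positivity),
        div_mul_eq_mul_div, div_lt_iff₀ (by positivity)]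
      nlinarith)
    rw [map_smul, smul_eq_mul, abs_mul,
      abs_of_pos (show (0:ℝ) < r / (2 * ‖b i‖) by positivity)] at hkey
    have hbd : |lam (b i)| ≤ lam x₀ / (r / (2 * ‖b i‖)) := by
      rw [le_div_iff₀ (by positivity)]
      calc |lam (b i)| * (r / (2 * ‖b i‖)) = r / (2 * ‖b i‖) * |lam (b i)| := mul_comm _ _
        _ ≤ lam x₀ := hkey
    rw [div_div_eq_mul_div] at hbd
    calc |lam (b i)| ≤ lam x₀ * (2 * ‖b i‖) / r := hbd
      _ ≤ (‖ξ‖ / ε) * (2 * ‖b i‖) / r := by gcongr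
      _ = M * ‖b i‖ := by rw [hM]; ring
  -- finiteness via integrality and the bound
  set N : ι → ℤ := fun i => ⌈M * ‖b i‖⌉ with hN
  set f : (V →L[ℝ] ℝ) → (ι → ℝ) := fun lam i => lam (b i) with hf
  have hfinj : Function.Injective f := by
    intro lam μ h
    apply ContinuousLinearMap.coe_injective
    exact b.ext fun i => congrFun h i
  set T : Set (ι → ℝ) := Set.pi Set.univ fun i => ((↑) '' (Set.Icc (-N i) (N i)) : Set ℝ)
    with hT
  have hTfin : T.Finite := Set.Finite.pi fun i => (Set.finite_Icc _ _).image _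
  apply Set.Finite.subset (hTfin.preimage (hfinj.injOn))
  rintro lam ⟨h1, h2, h3⟩
  intro i _
  obtain ⟨n, hn⟩ := h3 (b i) (Submodule.subset_span ⟨i, rfl⟩)
  refine ⟨n, ?_, hn.symm⟩
  have hb := key lam h1 h2 i
  rw [hn] at hb
  have habs : |n| ≤ N i := by
    have h6 : ((|n| : ℤ) : ℝ) ≤ ((N i : ℤ) : ℝ) := by
      rw [Int.cast_abs]
      exact le_trans hb (Int.le_ceil _)
    exact_mod_cast h6
  exact Set.mem_Icc.2 ⟨neg_le_of_abs_le habs, le_of_abs_le habs⟩
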